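/- Let N ≥ 1, let B be an abelian group, and let f : ℤ^N → B be a function of finite functional degree (i.e., fdeg(f) ≤ D for some D ∈ ℕ). Then for every d ∈ ℕ: fdeg(f) ≤ d if and only if Δ^n f(0) = 0 for every n ∈ ℕ^N with |n| > d. Consequently fdeg(f) = sup{ |n| : n ∈ ℕ^N, Δ^n f(0) ≠ 0 } (with sup ∅ := −∞). -/

import Mathlib

/-- The difference operator `Δ_a` sending `f` to `x ↦ f (x + a) - f x`. -/
def disc {A B : Type*} [AddCommGroup A] [AddCommGroup B] (a : A) (f : A → B) : A → B :=
  fun x => f (x + a) - f x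

/-- Iterated difference operator `Δ_{a_1} ⋯ Δ_{a_k} f` along a list `[a_1, …, a_k]`. -/
def multiDisc {A B : Type*} [AddCommGroup A] [AddCommGroup B] : List A → (A → B) → (A → B)
  | [], f => f
  | a :: l, f => disc a (multiDisc l f)

/-- `FdegLE f d` says that the functional degree of `f` is at most `d`, i.e. all
`(d+1)`-fold iterated differences of `f` vanish. -/
def FdegLE {A B : Type*} [AddCommGroup A] [AddCommGroup B] (f : A → B) (d : ℕ) : Prop :=
  ∀ l : List A, l.length = d + 1 → multiDisc l f = 0

/-- The multi-index iterated difference operator `Δ^n = Δ_1^{n_1} ⋯ Δ_N^{n_N}` on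
functions `ℤ^N → B`, where `Δ_i = Δ_{e_i}` for the `i`-th standard basis vector. -/
def deltaPow {B : Type*} [AddCommGroup B] {N : ℕ} (n : Fin N → ℕ) (f : (Fin N → ℤ) → B) :
    (Fin N → ℤ) → B :=
  ((List.ofFn fun i => (disc (Pi.single i (1 : ℤ)))^[n i]).foldr (· ∘ ·) id) f

/-- The functional degree `fdeg f ∈ {-∞} ∪ ℕ ∪ {∞}` of `f : A → B`, namely
the supremum of the lengths of lists `[a_1, …, a_k]` with `Δ_{a_1} ⋯ Δ_{a_k} f ≠ 0`
(with `sup ∅ = ⊥ = -∞`). -/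
noncomputable def fdeg {A B : Type*} [AddCommGroup A] [AddCommGroup B] (f : A → B) :
    WithBot ℕ∞ :=
  sSup {d : WithBot ℕ∞ | ∃ l : List A, multiDisc l f ≠ 0 ∧ (l.length : WithBot ℕ∞) = d}

section Aux

variable {A B : Type*} [AddCommGroup A] [AddCommGroup B]

lemma disc_comm (a b : A) (g : A → B) : disc a (disc b g) = disc b (disc a g) := by
  funext x
  simp only [disc]
  rw [add_right_comm]
  abel

lemma disc_zero (a : A) : disc a (0 : A → B) = 0 := by
  funext x; simp [disc]

lemma multiDisc_cons (a : A) (l : List A) (f : A → B) :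
    multiDisc (a :: l) f = disc a (multiDisc l f) := rfl

lemma multiDisc_nil (f : A → B) : multiDisc ([] : List A) f = f := rfl

lemma multiDisc_zero (l : List A) : multiDisc l (0 : A → B) = 0 := by
  induction l with
  | nil => rfl
  | cons a l ih => rw [multiDisc_cons, ih, disc_zero]

lemma multiDisc_append (l1 l2 : List A) (f : A → B) :
    multiDisc (l1 ++ l2) f = multiDisc l1 (multiDisc l2 f) := by
  induction l1 with
  | nil => rfl
  | cons a l ih => rw [List.cons_append, multiDisc_cons, multiDisc_cons, ih]

lemma multiDisc_pull (l : List A) (a : A) (g : A → B) :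
    multiDisc l (disc a g) = disc a (multiDisc l g) := by
  induction l with
  | nil => rfl
  | cons b l ih => rw [multiDisc_cons, multiDisc_cons, ih, disc_comm]

lemma disc_iterate_comm (k : ℕ) (a b : A) (g : A → B) :
    disc a ((disc b)^[k] g) = (disc b)^[k] (disc a g) := by
  induction k with
  | zero => rfl
  | succ k ih =>
      rw [Function.iterate_succ_apply', disc_comm, ih, Function.iterate_succ_apply']

lemma long_vanish {f : A → B} {D : ℕ} (hD : FdegLE f D) {l : List A}
    (hl : D + 1 ≤ l.length) : multiDisc l f = 0 := by
  have hsplit : l = l.take (l.length - (D + 1)) ++ l.drop (l.length - (D + 1)) :=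
    (List.take_append_drop _ _).symm
  rw [hsplit, multiDisc_append, hD (l.drop _) (by rw [List.length_drop]; omega), multiDisc_zero]

lemma foldr_comp_apply {X : Type*} (l : List (X → X)) (x : X) :
    (l.foldr (· ∘ ·) id) x = l.foldr (fun F y => F y) x := by
  induction l with
  | nil => rfl
  | cons F l ih => simp only [List.foldr_cons, Function.comp_apply, ih]

lemma foldr_id {X : Type*} (l : List (X → X)) (h : ∀ F ∈ l, F = id) (x : X) :
    l.foldr (fun F y => F y) x = x := by
  induction l with
  | nil => rfl
  | cons F l ih =>
      rw [List.foldr_cons, h F (by simp), ih (fun F hF => h F (by simp [hF]))]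
      rfl

lemma foldr_apply_set {X : Type*} (F G : X → X) :
    ∀ (l : List (X → X)), (∀ H ∈ l, ∀ y, F (H y) = H (F y)) →
      ∀ (i : ℕ), i < l.length → ∀ (x : X),
        (l.set i (F ∘ G)).foldr (fun H y => H y) x
          = F ((l.set i G).foldr (fun H y => H y) x) := by
  intro l
  induction l with
  | nil => intro _ i hi; exact absurd hi (by simp)
  | cons a l ih =>
      intro hcomm i hi x
      cases i with
      | zero => rfl
      | succ i =>
          simp only [List.set_cons_succ, List.foldr_cons]
          rw [ih (fun H hH => hcomm H (List.mem_cons_of_mem a hH)) i (by simpa using hi) x]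
          exact (hcomm a (List.mem_cons_self) _).symm

end Aux

section DeltaPow

variable {B : Type*} [AddCommGroup B] {N : ℕ}

lemma deltaPow_eq_foldr (n : Fin N → ℕ) (f : (Fin N → ℤ) → B) :
    deltaPow n f
      = (List.ofFn fun i => (disc (Pi.single i (1 : ℤ)))^[n i]).foldr (fun F g => F g) f :=
  foldr_comp_apply _ f

lemma deltaPow_zero' {n : Fin N → ℕ} (h : ∀ i, n i = 0) (f : (Fin N → ℤ) → B) :
    deltaPow n f = f := by
  rw [deltaPow_eq_foldr]
  apply foldr_id
  intro F hF
  rcases List.mem_ofFn.mp hF with ⟨i, rfl⟩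
  rw [h i]
  rfl

lemma deltaPow_update (n : Fin N → ℕ) (i : Fin N) (f : (Fin N → ℤ) → B) :
    deltaPow (Function.update n i (n i + 1)) f
      = disc (Pi.single i 1) (deltaPow n f) := by
  rw [deltaPow_eq_foldr, deltaPow_eq_foldr]
  have hlist : (List.ofFn fun j => (disc (B := B) (Pi.single j (1 : ℤ)))^[Function.update n i (n i + 1) j])
      = (List.ofFn fun j => (disc (Pi.single j (1 : ℤ)))^[n j]).set (i : ℕ)
          ((disc (Pi.single i (1 : ℤ))) ∘ (disc (Pi.single i (1 : ℤ)))^[n i]) := by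
    apply List.ext_getElem
    · simp
    · intro j h1 h2
      have hjN : j < N := by simpa using h1
      rw [List.getElem_set]
      by_cases hj : (i : ℕ) = j
      · have : (⟨j, hjN⟩ : Fin N) = i := Fin.ext hj.symm
        simp only [if_pos hj, List.getElem_ofFn]
        rw [this, Function.update_self, Function.iterate_succ']
      · simp only [if_neg hj, List.getElem_ofFn]
        have : (⟨j, hjN⟩ : Fin N) ≠ i := by
          intro h; exact hj (by rw [← h])
        rw [Function.update_of_ne this]
  have hG : (List.ofFn fun j => (disc (B := B) (Pi.single j (1 : ℤ)))^[n j]).set (i : ℕ)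
        ((disc (Pi.single i (1 : ℤ)))^[n i])
      = List.ofFn fun j => (disc (Pi.single j (1 : ℤ)))^[n j] := by
    apply List.ext_getElem
    · simp
    · intro j h1 h2
      have hjN : j < N := by simpa using h2
      rw [List.getElem_set]
      by_cases hj : (i : ℕ) = j
      · have : (⟨j, hjN⟩ : Fin N) = i := Fin.ext hj.symm
        simp only [if_pos hj, List.getElem_ofFn]
        rw [this]
      · simp only [if_neg hj]
  have hcomm : ∀ H ∈ (List.ofFn fun j => (disc (B := B) (Pi.single j (1 : ℤ)))^[n j]),
      ∀ y, disc (Pi.single i (1 : ℤ)) (H y) = H (disc (Pi.single i (1 : ℤ)) y) := by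
    intro H hH y
    rcases List.mem_ofFn.mp hH with ⟨j, rfl⟩
    exact disc_iterate_comm _ _ _ _
  rw [hlist, foldr_apply_set _ _ _ hcomm (i : ℕ) (by simpa using i.2) f, hG]

lemma sum_update_succ (n : Fin N → ℕ) (i : Fin N) :
    ∑ j, Function.update n i (n i + 1) j = (∑ j, n j) + 1 := by
  rw [Finset.sum_update_of_mem (Finset.mem_univ i)]
  have := Finset.sum_eq_sum_sdiff_singleton_add (Finset.mem_univ i) n
  omega

lemma eq_const (g : (Fin N → ℤ) → B) (h : ∀ i, disc (Pi.single i (1 : ℤ)) g = 0)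
    (x : Fin N → ℤ) : g x = g 0 := by
  let H : AddSubgroup (Fin N → ℤ) :=
    { carrier := {a | ∀ y, g (y + a) = g y}
      zero_mem' := by intro y; rw [add_zero]
      add_mem' := by
        intro a b ha hb y
        rw [← add_assoc, hb, ha]
      neg_mem' := by
        intro a ha y
        have := ha (y + -a)
        rw [add_assoc, neg_add_cancel, add_zero] at this
        exact this.symm }
  have hgen : ∀ i, Pi.single i (1 : ℤ) ∈ H := by
    intro i y
    have := congrFun (h i) y
    simpa [disc, sub_eq_zero] using this
  have hall : ∀ a, a ∈ H := by
    intro a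
    have ha : a = ∑ i, a i • Pi.single i (1 : ℤ) := by
      funext j
      simp [Pi.single_apply, Finset.sum_ite_eq']
    rw [ha]
    exact sum_mem fun i _ => zsmul_mem (hgen i) (a i)
  have := hall x 0
  rw [zero_add] at this
  exact this

lemma exists_list :
    ∀ (k : ℕ) (n : Fin N → ℕ), (∑ i, n i) = k →
      ∃ l : List (Fin N → ℤ), l.length = k ∧
        ∀ f : (Fin N → ℤ) → B, deltaPow n f = multiDisc l f := by
  intro k
  induction k with
  | zero =>
      intro n hn
      refine ⟨[], rfl, fun f => ?_⟩
      rw [deltaPow_zero' (fun i => by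
        have := (Finset.sum_eq_zero_iff).mp hn i (Finset.mem_univ i)
        exact this)]
      rfl
  | succ k ih =>
      intro n hn
      have hex : ∃ i, n i ≠ 0 := by
        by_contra h
        push_neg at h
        simp [h] at hn
      obtain ⟨i, hi⟩ := hex
      set m := Function.update n i (n i - 1) with hm
      have hmi : m i = n i - 1 := by rw [hm, Function.update_self]
      have hsum : (∑ j, m j) = k := by
        rw [hm, Finset.sum_update_of_mem (Finset.mem_univ i)]
        have := Finset.sum_eq_sum_sdiff_singleton_add (Finset.mem_univ i) n
        omega
      have hn' : n = Function.update m i (m i + 1) := by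
        funext j
        rcases eq_or_ne j i with rfl | hj
        · rw [Function.update_self, hmi]; omega
        · rw [Function.update_of_ne hj, hm, Function.update_of_ne hj]
      obtain ⟨l, hl, hlf⟩ := ih m hsum
      refine ⟨Pi.single i 1 :: l, by simp [hl], fun f => ?_⟩
      rw [hn', deltaPow_update, hlf, multiDisc_cons]

lemma core1 {f : (Fin N → ℤ) → B} {k : ℕ}
    (hΔ : ∀ n : Fin N → ℕ, (∑ i, n i) = k → deltaPow n f = 0) :
    ∀ (l : List (Fin N → ℤ)) (n : Fin N → ℕ),
      l.length + ∑ i, n i = k → multiDisc l (deltaPow n f) = 0 := by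
  intro l
  induction l with
  | nil => intro n hn; exact hΔ n (by simpa using hn)
  | cons a l ih =>
      intro n hn
      have hg : ∀ i, disc (Pi.single i (1 : ℤ)) (multiDisc l (deltaPow n f)) = 0 := by
        intro i
        rw [← multiDisc_pull, ← deltaPow_update]
        refine ih _ ?_
        rw [sum_update_succ]
        simp only [List.length_cons] at hn
        omega
      rw [multiDisc_cons]
      funext x
      have h1 := eq_const _ hg (x + a)
      have h2 := eq_const _ hg x
      simp only [disc, Pi.zero_apply]
      rw [h1, h2, sub_self]

lemma core2 {f : (Fin N → ℤ) → B} {D k : ℕ} (hD : FdegLE f D)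
    (h0 : ∀ n : Fin N → ℕ, k ≤ ∑ i, n i → deltaPow n f 0 = 0) :
    ∀ n : Fin N → ℕ, k ≤ ∑ i, n i → deltaPow n f = 0 := by
  suffices Hj : ∀ (j : ℕ) (n : Fin N → ℕ), k ≤ ∑ i, n i →
      D + 1 ≤ (∑ i, n i) + j → deltaPow n f = 0 by
    intro n hn
    exact Hj (D + 1) n hn (by omega)
  intro j
  induction j with
  | zero =>
      intro n hk hDn
      obtain ⟨l, hl, hlf⟩ := exists_list (B := B) (∑ i, n i) n rfl
      rw [hlf]
      exact long_vanish hD (by omega)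
  | succ j ih =>
      intro n hk hDn
      have hconst : ∀ i, disc (Pi.single i (1 : ℤ)) (deltaPow n f) = 0 := by
        intro i
        rw [← deltaPow_update]
        exact ih _ (by rw [sum_update_succ]; omega) (by rw [sum_update_succ]; omega)
      funext x
      have := eq_const (deltaPow n f) hconst x
      simp only [Pi.zero_apply]
      rw [this]
      exact h0 n hk

end DeltaPow

/-- **Localized computation of the functional degree.** Let `f : ℤ^N → B` have finite
functional degree. Then for every `d ∈ ℕ`, `fdeg f ≤ d` iff `Δ^n f (0) = 0` for every
multi-index `n` with `|n| > d`; consequently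
`fdeg f = sup { |n| : n ∈ ℕ^N, Δ^n f (0) ≠ 0 }` (with `sup ∅ = -∞`). -/
theorem fdeg_eq_sup_deltaPow_apply_zero_ne_zero
    (N : ℕ) (hN : 1 ≤ N) {B : Type*} [AddCommGroup B] (f : (Fin N → ℤ) → B)
    (hfin : ∃ D : ℕ, FdegLE f D) :
    (∀ d : ℕ, FdegLE f d ↔ ∀ n : Fin N → ℕ, d < ∑ i, n i → deltaPow n f 0 = 0) ∧
    fdeg f = sSup {d : WithBot ℕ∞ |
      ∃ n : Fin N → ℕ, deltaPow n f 0 ≠ 0 ∧ ((∑ i, n i : ℕ) : WithBot ℕ∞) = d} := by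
  obtain ⟨D, hD⟩ := hfin
  have vanish_of_zero : ∀ (k : ℕ) (l : List (Fin N → ℤ)),
      (∀ n : Fin N → ℕ, k ≤ ∑ i, n i → deltaPow n f 0 = 0) → l.length = k →
      multiDisc l f = 0 := by
    intro k l h0 hl
    have hΔ := core2 hD h0
    have := core1 (f := f) (k := k) (fun n hn => hΔ n (le_of_eq hn.symm)) l 0
      (by simp [hl])
    rwa [deltaPow_zero' (n := 0) (fun i => rfl)] at this
  have part1 : ∀ d : ℕ, FdegLE f d ↔
      ∀ n : Fin N → ℕ, d < ∑ i, n i → deltaPow n f 0 = 0 := by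
    intro d
    constructor
    · intro hd n hn
      obtain ⟨l, hl, hlf⟩ := exists_list (B := B) (∑ i, n i) n rfl
      rw [hlf, long_vanish hd (by omega)]
      rfl
    · intro h0 l hl
      exact vanish_of_zero (d + 1) l (fun n hn => h0 n (by omega)) hl
  refine ⟨part1, ?_⟩
  apply le_antisymm
  · apply sSup_le
    rintro d ⟨l, hl0, rfl⟩
    have key : ∃ n : Fin N → ℕ, l.length ≤ ∑ i, n i ∧ deltaPow n f 0 ≠ 0 := by
      by_contra hno
      push_neg at hno
      exact hl0 (vanish_of_zero l.length l hno rfl)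
    obtain ⟨n, hn1, hn2⟩ := key
    calc (l.length : WithBot ℕ∞) ≤ ((∑ i, n i : ℕ) : WithBot ℕ∞) := by exact_mod_cast hn1
      _ ≤ sSup {d : WithBot ℕ∞ |
          ∃ n : Fin N → ℕ, deltaPow n f 0 ≠ 0 ∧ ((∑ i, n i : ℕ) : WithBot ℕ∞) = d} :=
        le_sSup ⟨n, hn2, rfl⟩
  · apply sSup_le
    rintro d ⟨n, hn0, rfl⟩
    obtain ⟨l, hl, hlf⟩ := exists_list (B := B) (∑ i, n i) n rfl
    apply le_sSup
    refine ⟨l, ?_, by rw [hl]⟩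
    intro h
    exact hn0 (by rw [hlf, h]; rfl)
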